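/- If v ≤ v' in the Bruhat order on a Coxeter group W, then for all u, w ∈ W one has u · v · w ≤ u · v' · w, where · denotes the Hecke product. -/

import Mathlib

noncomputable section

namespace CoxeterSystem

variable {B W : Type*} [Group W] {M : CoxeterMatrix B} (cs : CoxeterSystem M W)

/-- one step of the Hecke (Demazure) product: multiply by a simple reflection -/
def heckeStep (u : W) (i : B) : W :=
  if cs.length u < cs.length (u * cs.simple i) then u * cs.simple i else u

/-- the Hecke product of `u` with the product of a word `l` -/
def heckeWord (u : W) (l : List B) : W := l.foldl cs.heckeStep u

/-- the Hecke (Demazure) product on `W`, computed via a chosen reduced word for the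
second argument -/
def heckeMul (u v : W) : W := cs.heckeWord u (cs.exists_reduced_word' v).choose

/-- the Bruhat order on `W`, via the subword property -/
def bruhatLE (u w : W) : Prop :=
  ∃ l l' : List B, cs.IsReduced l ∧ cs.wordProd l = w ∧
    l'.Sublist l ∧ cs.wordProd l' = u

/-- the (right) inversion set of `w`, as a set of reflections -/
def invSet (w : W) : Set W := {t | cs.IsRightInversion w t}

end CoxeterSystem

end

noncomputable section

namespace CoxeterSystem

open List
open scoped Classical

variable {B W : Type*} [Group W] {M : CoxeterMatrix B} (cs : CoxeterSystem M W)

local prefix:100 "s" => cs.simple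
local prefix:100 "π" => cs.wordProd
local prefix:100 "ℓ" => cs.length

/-! ### The permutation representation on `W × ZMod 2` -/

/-- The permutation associated to a simple reflection. -/
def refPerm (i : B) : Equiv.Perm (W × ZMod 2) where
  toFun x := (s i * x.1 * s i, x.2 + if x.1 = s i then 1 else 0)
  invFun x := (s i * x.1 * s i, x.2 + if x.1 = s i then 1 else 0)
  left_inv := by
    rintro ⟨t, e⟩
    have h1 : s i * (s i * t * s i) * s i = t := by
      group
      simp [cs.simple_sq, mul_assoc]
    have h2 : (s i * t * s i = s i) ↔ (t = s i) := by
      constructor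
      · intro h
        have := congrArg (fun z => s i * z * s i) h
        simpa [mul_assoc, cs.simple_mul_simple_cancel_left,
          cs.simple_mul_simple_self] using this
      · rintro rfl; simp [cs.simple_mul_simple_self]
    simp only [Prod.mk.injEq, h1, h2]
    constructor
    · trivial
    · rcases em (t = s i) with h | h <;> simp [h, add_assoc]
      exact CharTwo.add_self_eq_zero 1
  right_inv := by
    rintro ⟨t, e⟩
    have h1 : s i * (s i * t * s i) * s i = t := by
      group
      simp [cs.simple_sq, mul_assoc]
    have h2 : (s i * t * s i = s i) ↔ (t = s i) := by
      constructor
      · intro h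
        have := congrArg (fun z => s i * z * s i) h
        simpa [mul_assoc, cs.simple_mul_simple_cancel_left,
          cs.simple_mul_simple_self] using this
      · rintro rfl; simp [cs.simple_mul_simple_self]
    simp only [Prod.mk.injEq, h1, h2]
    constructor
    · trivial
    · rcases em (t = s i) with h | h <;> simp [h, add_assoc]
      exact CharTwo.add_self_eq_zero 1

theorem conj_eq_iff' (a c t : W) : (a * t * a⁻¹ = c) ↔ (t = a⁻¹ * c * a) := by
  constructor
  · intro h; rw [← h]; group
  · intro h; rw [h]; group

theorem refPerm_mul_pow_apply (i j : B) (k : ℕ) (t : W) (e : ZMod 2) :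
    ((cs.refPerm i * cs.refPerm j) ^ k) (t, e)
      = ((s i * s j) ^ k * t * ((s i * s j) ^ k)⁻¹,
         e + ∑ r ∈ Finset.range (2 * k),
              if t = s j * (s i * s j) ^ r then (1 : ZMod 2) else 0) := by
  obtain ⟨p, hp⟩ : ∃ p : W, p = s i * s j := ⟨_, rfl⟩
  simp only [← hp]
  have hconjk : ∀ k : ℕ, s j * p ^ k * s j = (p ^ k)⁻¹ := by
    intro k
    have h1 : s j * p * (s j)⁻¹ = p⁻¹ := by
      rw [cs.inv_simple, hp]
      calc s j * (s i * s j) * s j = s j * s i * (s j * s j) := by group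
        _ = s j * s i * 1 := by rw [cs.simple_mul_simple_self]
        _ = s j * s i := by rw [mul_one]
        _ = (s i * s j)⁻¹ := by rw [mul_inv_rev, cs.inv_simple, cs.inv_simple]
    calc s j * p ^ k * s j = s j * p ^ k * (s j)⁻¹ := by rw [cs.inv_simple]
      _ = (s j * p * (s j)⁻¹) ^ k := by rw [conj_pow]
      _ = (p⁻¹) ^ k := by rw [h1]
      _ = (p ^ k)⁻¹ := by rw [inv_pow]
  have hinvk : ∀ k : ℕ, (p ^ k)⁻¹ = s j * p ^ k * s j := fun k => (hconjk k).symm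
  induction k with
  | zero => simp
  | succ k ih =>
    rw [pow_succ', Equiv.Perm.mul_apply, ih]
    have happ : ∀ x : W × ZMod 2, (cs.refPerm i * cs.refPerm j) x
        = (s i * s j * x.1 * (s j * s i),
           x.2 + ((if x.1 = s j then (1 : ZMod 2) else 0)
             + if s j * x.1 * s j = s i then (1 : ZMod 2) else 0)) := by
      rintro ⟨a, c⟩
      show cs.refPerm i (cs.refPerm j (a, c)) = _
      simp only [refPerm, Equiv.coe_fn_mk, Prod.mk.injEq]
      refine ⟨?_, ?_⟩
      · group
      · push_cast
        ring
    rw [happ]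
    simp only [Prod.mk.injEq]
    refine ⟨?_, ?_⟩
    · show s i * s j * (p ^ k * t * (p ^ k)⁻¹) * (s j * s i) = p ^ (k+1) * t * (p ^ (k+1))⁻¹
      have h1 : s j * s i = p⁻¹ := by rw [hp, mul_inv_rev, cs.inv_simple, cs.inv_simple]
      calc s i * s j * (p ^ k * t * (p ^ k)⁻¹) * (s j * s i)
          = p * (p ^ k * t * (p ^ k)⁻¹) * p⁻¹ := by rw [← hp, h1]
        _ = (p * p ^ k) * t * ((p ^ k)⁻¹ * p⁻¹) := by group
        _ = p ^ (k+1) * t * (p ^ (k+1))⁻¹ := by rw [pow_succ', mul_inv_rev]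
    · show _ = e + ∑ r ∈ Finset.range (2 * (k+1)), if t = s j * p ^ r then (1 : ZMod 2) else 0
      have h2k : 2 * (k + 1) = (2 * k) + 1 + 1 := by ring
      rw [h2k, Finset.sum_range_succ, Finset.sum_range_succ]
      have hc1 : (p ^ k * t * (p ^ k)⁻¹ = s j) ↔ (t = s j * p ^ (2 * k)) := by
        rw [conj_eq_iff']
        have : (p ^ k)⁻¹ * s j * p ^ k = s j * p ^ (2 * k) := by
          rw [hinvk]
          calc s j * p ^ k * s j * s j * p ^ k = s j * p ^ k * (s j * s j) * p ^ k := by group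
            _ = s j * (p ^ k * p ^ k) := by rw [cs.simple_mul_simple_self]; group
            _ = s j * p ^ (2 * k) := by rw [← pow_add, two_mul]
        rw [this]
      have hc2 : (s j * (p ^ k * t * (p ^ k)⁻¹) * s j = s i) ↔ (t = s j * p ^ (2 * k + 1)) := by
        have ha : s j * (p ^ k * t * (p ^ k)⁻¹) * s j = (s j * p ^ k) * t * (s j * p ^ k)⁻¹ := by
          rw [mul_inv_rev, cs.inv_simple]; group
        rw [ha, conj_eq_iff']
        have : (s j * p ^ k)⁻¹ * s i * (s j * p ^ k) = s j * p ^ (2 * k + 1) := by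
          rw [mul_inv_rev, cs.inv_simple]
          calc (p ^ k)⁻¹ * s j * s i * (s j * p ^ k)
              = (p ^ k)⁻¹ * (s j * s i) * s j * p ^ k := by group
            _ = (p ^ k)⁻¹ * p⁻¹ * s j * p ^ k := by
                  rw [show s j * s i = p⁻¹ by rw [hp, mul_inv_rev, cs.inv_simple, cs.inv_simple]]
            _ = p⁻¹ * (p ^ k)⁻¹ * s j * p ^ k := by
                  rw [show (p ^ k)⁻¹ * p⁻¹ = p⁻¹ * (p ^ k)⁻¹ by group]
            _ = (p ^ (k+1))⁻¹ * s j * p ^ k := by rw [pow_succ, mul_inv_rev]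
            _ = s j * p ^ (k+1) * s j * s j * p ^ k := by rw [hinvk]
            _ = s j * p ^ (k+1) * (s j * s j) * p ^ k := by group
            _ = s j * (p ^ (k+1) * p ^ k) := by rw [cs.simple_mul_simple_self]; group
            _ = s j * p ^ (2 * k + 1) := by rw [← pow_add]; ring_nf
        rw [this]
      rw [if_congr hc1 rfl rfl, if_congr hc2 rfl rfl]
      push_cast
      ring

theorem refPerm_liftable : M.IsLiftable (cs.refPerm) := by
  intro i j
  apply Equiv.ext
  rintro ⟨t, e⟩
  rw [Equiv.Perm.one_apply, refPerm_mul_pow_apply]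
  have hp : (s i * s j) ^ M i j = 1 := cs.simple_mul_simple_pow i j
  rw [hp]
  have hsum : ∑ r ∈ Finset.range (2 * M i j),
      (if t = s j * (s i * s j) ^ r then (1 : ZMod 2) else 0) = 0 := by
    rw [two_mul, Finset.sum_range_add]
    have : ∀ r, (s i * s j) ^ (M i j + r) = (s i * s j) ^ r := by
      intro r; rw [pow_add, hp, one_mul]
    simp only [this]
    exact CharTwo.add_self_eq_zero _
  rw [hsum]
  simp

/-- The permutation representation of `W`. -/
def permRep : W →* Equiv.Perm (W × ZMod 2) := cs.lift ⟨cs.refPerm, cs.refPerm_liftable⟩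

/-- The inversion-parity cocycle. -/
def nu (w t : W) : ZMod 2 := (cs.permRep w (t, 0)).2

theorem permRep_simple (i : B) : cs.permRep (s i) = cs.refPerm i :=
  cs.lift_apply_simple cs.refPerm_liftable i

theorem permRep_wordProd (ω : List B) (t : W) (e : ZMod 2) :
    cs.permRep (π ω) (t, e)
      = (π ω * t * (π ω)⁻¹, e + ((cs.rightInvSeq ω).count t : ZMod 2)) := by
  induction ω generalizing t e with
  | nil => simp [cs.wordProd_nil, rightInvSeq]
  | cons i ω ih =>
    rw [cs.wordProd_cons, map_mul, Equiv.Perm.mul_apply, ih, cs.permRep_simple]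
    show ((s i) * (π ω * t * (π ω)⁻¹) * (s i), _) = _
    have hris : cs.rightInvSeq (i :: ω) = ((π ω)⁻¹ * (s i) * (π ω)) :: cs.rightInvSeq ω := rfl
    rw [hris, List.count_cons]
    simp only [Prod.mk.injEq]
    constructor
    · rw [mul_inv_rev, cs.inv_simple]; group
    · have hcond : (π ω * t * (π ω)⁻¹ = s i) ↔ ((π ω)⁻¹ * s i * π ω = t) :=
        (conj_eq_iff' (π ω) (s i) t).trans eq_comm
      rw [if_congr hcond rfl rfl]
      push_cast
      rcases em ((π ω)⁻¹ * s i * π ω = t) with h | h <;> simp [h] <;> ring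

theorem permRep_apply (w t : W) (e : ZMod 2) :
    cs.permRep w (t, e) = (w * t * w⁻¹, e + cs.nu w t) := by
  obtain ⟨ω, -, rfl⟩ := cs.exists_reduced_word' w
  rw [cs.permRep_wordProd, nu, cs.permRep_wordProd]
  simp

theorem nu_eq_count (ω : List B) (t : W) :
    cs.nu (π ω) t = ((cs.rightInvSeq ω).count t : ZMod 2) := by
  rw [nu, cs.permRep_wordProd]
  simp

theorem nu_mul (a b t : W) : cs.nu (a * b) t = cs.nu b t + cs.nu a (b * t * b⁻¹) := by
  have h1 : cs.permRep (a * b) (t, 0) = cs.permRep a (cs.permRep b (t, 0)) := by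
    rw [map_mul, Equiv.Perm.mul_apply]
  rw [cs.permRep_apply, cs.permRep_apply, cs.permRep_apply] at h1
  have := congrArg Prod.snd h1
  simp only at this
  rw [nu, cs.permRep_apply]
  simp only
  rw [this]
  abel

theorem nu_simple (i : B) (t : W) : cs.nu (s i) t = if t = s i then 1 else 0 := by
  rw [nu, cs.permRep_simple]
  show ((s i * t * s i, _) : W × ZMod 2).2 = _
  simp

theorem nu_one (t : W) : cs.nu 1 t = 0 := by
  rw [nu, map_one]
  rfl

theorem nu_refl_self {t : W} (ht : cs.IsReflection t) : cs.nu t t = 1 := by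
  obtain ⟨x, i, rfl⟩ := ht
  have h2 : ∀ a b : ZMod 2, 0 = a + b → a = b := by decide
  have h3 : ∀ a : ZMod 2, a + (1 + a) = 1 := by decide
  have hinv : cs.nu x⁻¹ (x * s i * x⁻¹) = cs.nu x (s i) := by
    have h0 := cs.nu_mul x x⁻¹ (x * s i * x⁻¹)
    rw [mul_inv_cancel, cs.nu_one] at h0
    rw [show x⁻¹ * (x * s i * x⁻¹) * x⁻¹⁻¹ = s i by group] at h0
    exact h2 _ _ h0
  have key := cs.nu_mul (x * s i) x⁻¹ (x * s i * x⁻¹)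
  rw [show x⁻¹ * (x * s i * x⁻¹) * x⁻¹⁻¹ = s i by group] at key
  have key2 := cs.nu_mul x (s i) (s i)
  rw [show s i * s i * (s i)⁻¹ = s i by group] at key2
  rw [show (x * s i) * x⁻¹ = x * s i * x⁻¹ from rfl] at key
  rw [key, hinv, key2, cs.nu_simple, if_pos rfl]
  exact h3 _

theorem nu_eq_one_of_inv {w t : W} (ht : cs.IsReflection t) (h : ℓ (w * t) < ℓ w) :
    cs.nu w t = 1 := by
  by_contra hne
  have h0 : cs.nu w t = 0 := by
    have : ∀ a : ZMod 2, a ≠ 1 → a = 0 := by decide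
    exact this _ hne
  have hwt : cs.nu (w * t) t = 1 := by
    have hh := cs.nu_mul w t t
    rw [show t * t * t⁻¹ = t by rw [mul_assoc, mul_inv_cancel, mul_one]] at hh
    rw [hh, cs.nu_refl_self ht, h0]
    rfl
  obtain ⟨ω, hred, hw⟩ := cs.exists_reduced_word' (w * t)
  have hcount : ((cs.rightInvSeq ω).count t : ZMod 2) = 1 := by
    rw [← cs.nu_eq_count, ← hw, hwt]
  have hmem : t ∈ cs.rightInvSeq ω := by
    by_contra hmem
    rw [List.count_eq_zero_of_not_mem hmem] at hcount
    simp at hcount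
  have hinv := (cs.isRightInversion_of_mem_rightInvSeq hred hmem).2
  rw [← hw, mul_assoc, ht.mul_self, mul_one] at hinv
  omega

theorem nu_eq_one_iff {w t : W} (ht : cs.IsReflection t) :
    cs.nu w t = 1 ↔ ℓ (w * t) < ℓ w := by
  constructor
  · intro h1
    obtain ⟨ω, hred, hw⟩ := cs.exists_reduced_word' w
    have hcount : ((cs.rightInvSeq ω).count t : ZMod 2) = 1 := by
      rw [← cs.nu_eq_count, ← hw, h1]
    have hmem : t ∈ cs.rightInvSeq ω := by
      by_contra hmem
      rw [List.count_eq_zero_of_not_mem hmem] at hcount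
      simp at hcount
    have := (cs.isRightInversion_of_mem_rightInvSeq hred hmem).2
    rwa [hw]
  · exact cs.nu_eq_one_of_inv ht

/-! ### Strong exchange and deletion -/

theorem strong_exchange {ω : List B} {t : W} (hω : cs.IsReduced ω)
    (ht : cs.IsRightInversion (π ω) t) :
    ∃ j < ω.length, π (ω.eraseIdx j) = π ω * t := by
  have h1 : cs.nu (π ω) t = 1 := cs.nu_eq_one_of_inv ht.1 ht.2
  rw [cs.nu_eq_count] at h1
  have hmem : t ∈ cs.rightInvSeq ω := by
    by_contra hmem
    rw [List.count_eq_zero_of_not_mem hmem] at h1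
    simp at h1
  obtain ⟨j, hj, hget⟩ := List.mem_iff_getElem.mp hmem
  rw [cs.length_rightInvSeq] at hj
  refine ⟨j, hj, ?_⟩
  have hgetD : (cs.rightInvSeq ω).getD j 1 = t := by
    rw [List.getD_eq_getElem?_getD, List.getElem?_eq_getElem (by rwa [cs.length_rightInvSeq])]
    simpa using hget
  rw [← cs.wordProd_mul_getD_rightInvSeq, hgetD]

theorem isReduced_nil : cs.IsReduced ([] : List B) := by
  simp [IsReduced]

theorem deletion (ω : List B) :
    ∃ κ : List B, κ.Sublist ω ∧ cs.IsReduced κ ∧ π κ = π ω := by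
  induction ω using List.reverseRecOn with
  | nil => exact ⟨[], List.Sublist.refl _, cs.isReduced_nil, rfl⟩
  | append_singleton γ i ih =>
    obtain ⟨κ, hsub, hred, hprod⟩ := ih
    have hπ : π (γ ++ [i]) = π γ * s i := by
      rw [cs.wordProd_append, cs.wordProd_singleton]
    rcases cs.length_mul_simple (π γ) i with hup | hdown
    · refine ⟨κ ++ [i], hsub.append (List.Sublist.refl _), ?_, ?_⟩
      · show ℓ (π (κ ++ [i])) = (κ ++ [i]).length
        rw [cs.wordProd_append, cs.wordProd_singleton, hprod, hup,
          List.length_append, List.length_singleton, ← hred, hprod]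
      · rw [cs.wordProd_append, cs.wordProd_singleton, hprod, hπ]
    · have hinv : cs.IsRightInversion (π κ) (s i) :=
        ⟨cs.isReflection_simple i, by rw [hprod]; omega⟩
      obtain ⟨j, hj, heq⟩ := cs.strong_exchange hred hinv
      refine ⟨κ.eraseIdx j, ?_, ?_, ?_⟩
      · exact ((κ.eraseIdx_sublist j).trans hsub).trans (List.sublist_append_left γ [i])
      · show ℓ (π (κ.eraseIdx j)) = (κ.eraseIdx j).length
        rw [heq, hprod]
        have hlen : (κ.eraseIdx j).length = κ.length - 1 := by
          simp [List.length_eraseIdx, hj]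
        rw [hlen, ← hred, hprod]
        omega
      · rw [heq, hprod, hπ]

/-! ### The chain (Bruhat) order -/

/-- One step up in the Bruhat order: multiply by a reflection, increasing length. -/
def liftUp (x y : W) : Prop := ∃ t, cs.IsReflection t ∧ x * t = y ∧ ℓ x < ℓ y

/-- The Bruhat order, defined via chains of reflections. -/
def cle (x y : W) : Prop := Relation.ReflTransGen cs.liftUp x y

theorem cle_refl (x : W) : cs.cle x x := Relation.ReflTransGen.refl

theorem cle_trans {x y z : W} (h1 : cs.cle x y) (h2 : cs.cle y z) : cs.cle x z :=
  Relation.ReflTransGen.trans h1 h2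

theorem cle_of_liftUp {x y : W} (h : cs.liftUp x y) : cs.cle x y :=
  Relation.ReflTransGen.single h

theorem cle_of_mul_refl {y t : W} (ht : cs.IsReflection t) (h : ℓ (y * t) < ℓ y) :
    cs.cle (y * t) y :=
  cs.cle_of_liftUp ⟨t, ht, by rw [mul_assoc, ht.mul_self, mul_one], h⟩

theorem cle_length_le {x y : W} (h : cs.cle x y) : ℓ x ≤ ℓ y := by
  induction h with
  | refl => exact le_refl _
  | tail h1 h2 ih => obtain ⟨t, -, -, hl⟩ := h2; omega

theorem cle_eq_of_length_ge {x y : W} (h : cs.cle x y) (hl : ℓ y ≤ ℓ x) : x = y := by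
  rcases Relation.ReflTransGen.cases_tail h with rfl | ⟨c, hc, hstep⟩
  · rfl
  · obtain ⟨t, -, -, hlt⟩ := hstep
    have := cs.cle_length_le hc
    omega

/-- Chains give subwords of every reduced word. -/
theorem cle_subword {x y : W} (h : cs.cle x y) :
    ∀ ω : List B, cs.IsReduced ω → π ω = y →
      ∃ κ : List B, κ.Sublist ω ∧ cs.IsReduced κ ∧ π κ = x := by
  induction h with
  | refl => exact fun ω hω hprod => ⟨ω, List.Sublist.refl _, hω, hprod⟩
  | tail h1 h2 ih =>
    rename_i c y'
    intro ω hω hprod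
    obtain ⟨t, ht, he, hlt⟩ := h2
    have hyt : y' * t = c := by rw [← he, mul_assoc, ht.mul_self, mul_one]
    have hinv : cs.IsRightInversion (π ω) t := ⟨ht, by rw [hprod, hyt, ← he] at *; omega⟩
    obtain ⟨j, hj, heq⟩ := cs.strong_exchange hω hinv
    obtain ⟨κc, hsubc, hredc, hprodc⟩ := cs.deletion (ω.eraseIdx j)
    have hc : π κc = c := by rw [hprodc, heq, hprod, hyt]
    obtain ⟨κ, hsub, hred, hprodκ⟩ := ih κc hredc hc
    exact ⟨κ, hsub.trans (hsubc.trans (ω.eraseIdx_sublist j)), hred, hprodκ⟩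

theorem isReduced_dropLast {γ : List B} {i : B} (h : cs.IsReduced (γ ++ [i])) :
    cs.IsReduced γ := by
  have := h.take γ.length
  rwa [List.take_left] at this

theorem length_concat_of_reduced {γ : List B} {i : B} (h : cs.IsReduced (γ ++ [i])) :
    ℓ (π γ * s i) = ℓ (π γ) + 1 := by
  have h1 : ℓ (π (γ ++ [i])) = γ.length + 1 := by
    rw [h]; simp
  rw [cs.wordProd_append, cs.wordProd_singleton] at h1
  rw [h1, cs.isReduced_dropLast h]

/-- The master triple: subword implies chain; lifting lemmas. -/
theorem triple (n : ℕ) :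
    (∀ ω κ : List B, ω.length ≤ n → cs.IsReduced ω → cs.IsReduced κ → κ.Sublist ω →
        cs.cle (π κ) (π ω)) ∧
    (∀ (z : W) (i : B) (x : W), ℓ z ≤ n → ℓ (z * s i) < ℓ z → cs.cle x z →
        ℓ x < ℓ (x * s i) → cs.cle (x * s i) z) ∧
    (∀ (y : W) (i : B) (x : W), ℓ y ≤ n → cs.cle x y → ℓ x < ℓ (x * s i) →
        ℓ y < ℓ (y * s i) → cs.cle (x * s i) (y * s i)) := by
  induction n using Nat.strong_induction_on with
  | _ n ih =>
  have SC : ∀ ω κ : List B, ω.length ≤ n → cs.IsReduced ω → cs.IsReduced κ → κ.Sublist ω →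
      cs.cle (π κ) (π ω) := by
    intro ω κ hn hω hκ hsub
    induction ω using List.reverseRecOn with
    | nil =>
      rw [List.sublist_nil.mp hsub]
      exact cs.cle_refl _
    | append_singleton γ i _ =>
      have hn1 : 1 ≤ n := le_trans (by simp) hn
      have hγn : γ.length ≤ n - 1 := by
        have := hn; simp at this; omega
      have hγ : cs.IsReduced γ := cs.isReduced_dropLast hω
      obtain ⟨κ₁, κ₂, hκeq, hsub₁, hsub₂⟩ := List.sublist_append_iff.mp hsub
      have hstep : cs.liftUp (π γ) (π (γ ++ [i])) := by
        refine ⟨s i, cs.isReflection_simple i, ?_, ?_⟩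
        · rw [cs.wordProd_append, cs.wordProd_singleton]
        · rw [cs.wordProd_append, cs.wordProd_singleton]
          rw [hγ, cs.length_concat_of_reduced hω, hγ]
          omega
      rcases List.sublist_singleton.mp hsub₂ with h2 | h2
      · -- κ = κ₁ <+ γ
        subst hκeq
        rw [h2, List.append_nil] at *
        have := (ih (n-1) (by omega)).1 γ κ₁ hγn hγ hκ hsub₁
        exact cs.cle_trans this (cs.cle_of_liftUp hstep)
      · -- κ = κ₁ ++ [i]
        subst hκeq
        rw [h2] at *
        have hκ₁ : cs.IsReduced κ₁ := cs.isReduced_dropLast hκ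
        have hch := (ih (n-1) (by omega)).1 γ κ₁ hγn hγ hκ₁ hsub₁
        have hL := (ih (n-1) (by omega)).2.2 (π γ) i (π κ₁)
          (by rw [hγ]; omega) hch
          (by rw [cs.length_concat_of_reduced hκ]; omega)
          (by rw [cs.length_concat_of_reduced hω]; omega)
        rw [cs.wordProd_append, cs.wordProd_singleton, cs.wordProd_append,
          cs.wordProd_singleton]
        exact hL
  have D : ∀ (z : W) (i : B) (x : W), ℓ z ≤ n → ℓ (z * s i) < ℓ z → cs.cle x z →
      ℓ x < ℓ (x * s i) → cs.cle (x * s i) z := by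
    intro z i x hn hdesc hle hasc
    obtain ⟨γ, hγred, hγprod⟩ := cs.exists_reduced_word' (z * s i)
    have hωprod : π (γ ++ [i]) = z := by
      rw [cs.wordProd_append, cs.wordProd_singleton, ← hγprod, mul_assoc,
        cs.simple_mul_simple_self, mul_one]
    have hωlen : (γ ++ [i]).length = ℓ z := by
      have h1 : γ.length = ℓ (z * s i) := by rw [← hγred, ← hγprod]
      have h2 : ℓ (z * s i) + 1 = ℓ z := by
        rcases cs.length_mul_simple z i with h | h <;> omega
      simp [h1, h2]
    have hωred : cs.IsReduced (γ ++ [i]) := by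
      show ℓ (π (γ ++ [i])) = _
      rw [hωprod, hωlen]
    obtain ⟨κ, hsub, hκred, hκprod⟩ := cs.cle_subword hle (γ ++ [i]) hωred hωprod
    obtain ⟨κ₁, κ₂, hκeq, hsub₁, hsub₂⟩ := List.sublist_append_iff.mp hsub
    rcases List.sublist_singleton.mp hsub₂ with h2 | h2
    · -- κ avoids the final i
      subst hκeq
      rw [h2, List.append_nil] at *
      have hredκi : cs.IsReduced (κ₁ ++ [i]) := by
        show ℓ (π (κ₁ ++ [i])) = _
        rw [cs.wordProd_append, cs.wordProd_singleton, hκprod]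
        have : ℓ (x * s i) = ℓ x + 1 := by
          rcases cs.length_mul_simple x i with h | h <;> omega
        rw [this, ← hκprod, hκred]
        simp
      have := SC (γ ++ [i]) (κ₁ ++ [i]) (by omega) hωred hredκi
        (hsub₁.append (List.Sublist.refl _))
      rw [cs.wordProd_append, cs.wordProd_singleton, hκprod, hωprod] at this
      exact this
    · -- κ ends in i : contradiction with ascent
      subst hκeq
      rw [h2] at *
      exfalso
      have hxsi : x * s i = π κ₁ := by
        rw [← hκprod, cs.wordProd_append, cs.wordProd_singleton, mul_assoc,
          cs.simple_mul_simple_self, mul_one]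
      have hlen1 : ℓ (x * s i) ≤ κ₁.length := by
        rw [hxsi]; exact cs.length_wordProd_le κ₁
      have hlen2 : ℓ x = κ₁.length + 1 := by
        rw [← hκprod, hκred]; simp
      omega
  have L : ∀ (y : W) (i : B) (x : W), ℓ y ≤ n → cs.cle x y → ℓ x < ℓ (x * s i) →
      ℓ y < ℓ (y * s i) → cs.cle (x * s i) (y * s i) := by
    intro y i x hn hle hxasc hyasc
    rcases Relation.ReflTransGen.cases_tail hle with rfl | ⟨z, hxz, hstep⟩
    · exact cs.cle_refl _
    · obtain ⟨t, ht, hzt, hzy⟩ := hstep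
      have hzn : ℓ z ≤ n - 1 := by omega
      by_cases hz : ℓ z < ℓ (z * s i)
      · have hL := (ih (n-1) (by omega)).2.2 z i x hzn hxz hxasc hz
        have hstep2 : cs.liftUp (z * s i) (y * s i) := by
          refine ⟨s i * t * s i, ?_, ?_, ?_⟩
          · have := ht.conj (s i)
            rwa [cs.inv_simple] at this
          · rw [show z * s i * (s i * t * s i) = z * (s i * s i) * t * s i by group,
              cs.simple_mul_simple_self, mul_one, hzt]
          · have h1 : ℓ (z * s i) = ℓ z + 1 := by
              rcases cs.length_mul_simple z i with h | h <;> omega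
            have h2 : ℓ (y * s i) = ℓ y + 1 := by
              rcases cs.length_mul_simple y i with h | h <;> omega
            omega
        exact cs.cle_trans hL (cs.cle_of_liftUp hstep2)
      · have hz' : ℓ (z * s i) < ℓ z := by
          have := cs.length_mul_simple_ne z i
          omega
        have hD := (ih (n-1) (by omega)).2.1 z i x hzn hz' hxz hxasc
        have h1 : cs.cle z y := cs.cle_of_liftUp ⟨t, ht, hzt, hzy⟩
        have h2 : cs.cle y (y * s i) :=
          cs.cle_of_liftUp ⟨s i, cs.isReflection_simple i, rfl, hyasc⟩
        exact cs.cle_trans hD (cs.cle_trans h1 h2)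
  exact ⟨SC, D, L⟩

/-! ### Consequences of the triple -/

theorem cle_of_subword {ω κ : List B} (hω : cs.IsReduced ω) (hκ : cs.IsReduced κ)
    (hsub : κ.Sublist ω) : cs.cle (π κ) (π ω) :=
  (cs.triple ω.length).1 ω κ (le_refl _) hω hκ hsub

theorem cle_mul_simple_of_descent {z : W} {i : B} {x : W} (hdesc : ℓ (z * s i) < ℓ z)
    (hle : cs.cle x z) (hasc : ℓ x < ℓ (x * s i)) : cs.cle (x * s i) z :=
  (cs.triple (ℓ z)).2.1 z i x (le_refl _) hdesc hle hasc

theorem cle_mul_simple_of_ascents {y : W} {i : B} {x : W} (hle : cs.cle x y)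
    (hxasc : ℓ x < ℓ (x * s i)) (hyasc : ℓ y < ℓ (y * s i)) :
    cs.cle (x * s i) (y * s i) :=
  (cs.triple (ℓ y)).2.2 y i x (le_refl _) hle hxasc hyasc

theorem bruhatLE_of_cle {x y : W} (h : cs.cle x y) : cs.bruhatLE x y := by
  obtain ⟨ω, hred, hprod⟩ := cs.exists_reduced_word' y
  obtain ⟨κ, hsub, -, hκprod⟩ := cs.cle_subword h ω hred hprod.symm
  exact ⟨ω, κ, hred, hprod.symm, hsub, hκprod⟩

theorem cle_of_bruhatLE {x y : W} (h : cs.bruhatLE x y) : cs.cle x y := by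
  obtain ⟨ω, κ, hred, hprod, hsub, hκprod⟩ := h
  obtain ⟨κ', hsub', hred', hprod'⟩ := cs.deletion κ
  have := cs.cle_of_subword hred hred' (hsub'.trans hsub)
  rwa [hprod', hκprod, hprod] at this

/-! ### Hecke product lemmas -/

theorem heckeStep_cases (u : W) (i : B) :
    (cs.heckeStep u i = u * s i ∧ ℓ u < ℓ (u * s i)) ∨
      (cs.heckeStep u i = u ∧ ℓ (u * s i) < ℓ u) := by
  unfold heckeStep
  by_cases h : ℓ u < ℓ (u * s i)
  · exact Or.inl ⟨if_pos h, h⟩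
  · have := cs.length_mul_simple_ne u i
    exact Or.inr ⟨if_neg h, by omega⟩

theorem cle_heckeStep_self (u : W) (i : B) : cs.cle u (cs.heckeStep u i) := by
  rcases cs.heckeStep_cases u i with ⟨he, hl⟩ | ⟨he, -⟩
  · rw [he]
    exact cs.cle_of_liftUp ⟨s i, cs.isReflection_simple i, rfl, by rw [← he] at hl ⊢; omega⟩
  · rw [he]
    exact cs.cle_refl _

theorem cle_heckeStep_mono {a b : W} (h : cs.cle a b) (i : B) :
    cs.cle (cs.heckeStep a i) (cs.heckeStep b i) := by
  rcases cs.heckeStep_cases b i with ⟨hbe, hbl⟩ | ⟨hbe, hbl⟩ <;>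
    rcases cs.heckeStep_cases a i with ⟨hae, hal⟩ | ⟨hae, hal⟩ <;> rw [hbe, hae]
  · exact cs.cle_mul_simple_of_ascents h hal hbl
  · exact cs.cle_trans h
      (cs.cle_of_liftUp ⟨s i, cs.isReflection_simple i, rfl, hbl⟩)
  · exact cs.cle_mul_simple_of_descent hbl h hal
  · exact h

theorem cle_mul_simple_heckeStep {a b : W} (h : cs.cle a b) (i : B) :
    cs.cle (a * s i) (cs.heckeStep b i) := by
  rcases cs.heckeStep_cases a i with ⟨hae, -⟩ | ⟨hae, hal⟩
  · rw [← hae]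
    exact cs.cle_heckeStep_mono h i
  · have h1 : cs.cle (a * s i) a := by
      refine cs.cle_of_liftUp ⟨s i, cs.isReflection_simple i, ?_, hal⟩
      rw [mul_assoc, cs.simple_mul_simple_self, mul_one]
    exact cs.cle_trans h1 (cs.cle_trans h (cs.cle_heckeStep_self b i))

theorem heckeWord_cons (u : W) (i : B) (l : List B) :
    cs.heckeWord u (i :: l) = cs.heckeWord (cs.heckeStep u i) l := rfl

theorem heckeWord_nil (u : W) : cs.heckeWord u [] = u := rfl

theorem heckeWord_append (u : W) (l₁ l₂ : List B) :
    cs.heckeWord u (l₁ ++ l₂) = cs.heckeWord (cs.heckeWord u l₁) l₂ :=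
  List.foldl_append ..

theorem heckeWord_concat (u : W) (l : List B) (i : B) :
    cs.heckeWord u (l ++ [i]) = cs.heckeStep (cs.heckeWord u l) i :=
  cs.heckeWord_append u l [i]

theorem cle_heckeWord_mono {a b : W} (h : cs.cle a b) (l : List B) :
    cs.cle (cs.heckeWord a l) (cs.heckeWord b l) := by
  induction l generalizing a b with
  | nil => exact h
  | cons i l ih =>
    rw [cs.heckeWord_cons, cs.heckeWord_cons]
    exact ih (cs.cle_heckeStep_mono h i)

theorem cle_heckeWord_self (u : W) (l : List B) : cs.cle u (cs.heckeWord u l) := by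
  induction l generalizing u with
  | nil => exact cs.cle_refl _
  | cons i l ih =>
    rw [cs.heckeWord_cons]
    exact cs.cle_trans (cs.cle_heckeStep_self u i) (ih _)

theorem cle_heckeWord_sublist {κ ω : List B} (hsub : κ.Sublist ω) (u : W) :
    cs.cle (cs.heckeWord u κ) (cs.heckeWord u ω) := by
  induction hsub generalizing u with
  | slnil => exact cs.cle_refl _
  | cons i hsub ih =>
    rename_i l₁ l₂
    rw [cs.heckeWord_cons]
    exact cs.cle_trans (ih u) (cs.cle_heckeWord_mono (cs.cle_heckeStep_self u i) l₂)
  | cons_cons i hsub ih =>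
    rw [cs.heckeWord_cons, cs.heckeWord_cons]
    exact ih _

theorem cle_mul_wordProd_heckeWord {κ ω : List B} (hsub : κ.Sublist ω) (u : W) :
    cs.cle (u * π κ) (cs.heckeWord u ω) := by
  induction ω using List.reverseRecOn generalizing κ with
  | nil =>
    rw [List.sublist_nil.mp hsub, cs.heckeWord_nil, cs.wordProd_nil, mul_one]
    exact cs.cle_refl _
  | append_singleton γ i ih =>
    obtain ⟨κ₁, κ₂, hκeq, hsub₁, hsub₂⟩ := List.sublist_append_iff.mp hsub
    subst hκeq
    rw [cs.heckeWord_concat]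
    rcases List.sublist_singleton.mp hsub₂ with h2 | h2 <;> rw [h2]
    · rw [List.append_nil]
      exact cs.cle_trans (ih hsub₁) (cs.cle_heckeStep_self _ i)
    · rw [cs.wordProd_append, cs.wordProd_singleton, ← mul_assoc]
      exact cs.cle_mul_simple_heckeStep (ih hsub₁) i

theorem heckeWord_eq_mul (u : W) (ω : List B) (hω : cs.IsReduced ω) :
    ∃ y, cs.cle y (π ω) ∧ cs.heckeWord u ω = u * y := by
  induction ω using List.reverseRecOn with
  | nil => exact ⟨1, cs.cle_refl _, by rw [cs.heckeWord_nil, mul_one]⟩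
  | append_singleton γ i ih =>
    obtain ⟨y, hy, heq⟩ := ih (cs.isReduced_dropLast hω)
    have hγasc : ℓ (π γ) < ℓ (π γ * s i) := by
      rw [cs.length_concat_of_reduced hω]; omega
    have hstep : cs.liftUp (π γ) (π (γ ++ [i])) :=
      ⟨s i, cs.isReflection_simple i,
        by rw [cs.wordProd_append, cs.wordProd_singleton],
        by rw [cs.wordProd_append, cs.wordProd_singleton]; exact hγasc⟩
    have hys : cs.cle (y * s i) (π (γ ++ [i])) := by
      by_cases hyasc : ℓ y < ℓ (y * s i)
      · have := cs.cle_mul_simple_of_ascents hy hyasc hγasc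
        rwa [cs.wordProd_append, cs.wordProd_singleton]
      · have hyd : ℓ (y * s i) < ℓ y := by
          have := cs.length_mul_simple_ne y i; omega
        have h1 : cs.cle (y * s i) y := by
          refine cs.cle_of_liftUp ⟨s i, cs.isReflection_simple i, ?_, hyd⟩
          rw [mul_assoc, cs.simple_mul_simple_self, mul_one]
        exact cs.cle_trans h1 (cs.cle_trans hy (cs.cle_of_liftUp hstep))
    rw [cs.heckeWord_concat, heq]
    rcases cs.heckeStep_cases (u * y) i with ⟨he, -⟩ | ⟨he, -⟩ <;> rw [he]
    · exact ⟨y * s i, hys, by rw [mul_assoc]⟩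
    · exact ⟨y, cs.cle_trans hy (cs.cle_of_liftUp hstep), rfl⟩

theorem heckeWord_well_defined (u : W) {ω ω' : List B} (hω : cs.IsReduced ω)
    (hω' : cs.IsReduced ω') (hprod : π ω = π ω') :
    cs.heckeWord u ω = cs.heckeWord u ω' := by
  have key : ∀ (α β : List B), cs.IsReduced α → cs.IsReduced β → π α = π β →
      cs.cle (cs.heckeWord u α) (cs.heckeWord u β) := by
    intro α β hα hβ hab
    obtain ⟨y, hy, heq⟩ := cs.heckeWord_eq_mul u α hα
    rw [hab] at hy
    obtain ⟨κ, hsub, hκred, hκprod⟩ := cs.cle_subword hy β hβ rfl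
    rw [heq, ← hκprod]
    exact cs.cle_mul_wordProd_heckeWord hsub u
  have h1 := key ω ω' hω hω' hprod
  have h2 := key ω' ω hω' hω hprod.symm
  exact cs.cle_eq_of_length_ge h1 (cs.cle_length_le h2)

end CoxeterSystem

end

/-- If `v ≤ v'` in Bruhat order then `u · v · w ≤ u · v' · w` for the Hecke product. -/
theorem heckeMul_mono
    {B W : Type*} [Group W] {M : CoxeterMatrix B} (cs : CoxeterSystem M W)
    (u v v' w : W) (h : cs.bruhatLE v v') :
    cs.bruhatLE (cs.heckeMul (cs.heckeMul u v) w) (cs.heckeMul (cs.heckeMul u v') w) := by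
  obtain ⟨hLv, hLvp⟩ := (cs.exists_reduced_word' v).choose_spec
  obtain ⟨hLv', hLvp'⟩ := (cs.exists_reduced_word' v').choose_spec
  obtain ⟨hLw, hLwp⟩ := (cs.exists_reduced_word' w).choose_spec
  set Lv := (cs.exists_reduced_word' v).choose with hLvdef
  set Lv' := (cs.exists_reduced_word' v').choose with hLvdef'
  set Lw := (cs.exists_reduced_word' w).choose with hLwdef
  have hcle : cs.cle v v' := cs.cle_of_bruhatLE h
  obtain ⟨κ, hsub, hκred, hκprod⟩ := cs.cle_subword hcle Lv' hLv' hLvp'.symm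
  have hindep : cs.heckeWord u Lv = cs.heckeWord u κ :=
    cs.heckeWord_well_defined u hLv hκred (by rw [← hLvp, hκprod])
  have hX : cs.heckeMul (cs.heckeMul u v) w = cs.heckeWord u (κ ++ Lw) := by
    rw [CoxeterSystem.heckeMul, CoxeterSystem.heckeMul, ← hLwdef, ← hLvdef, hindep, cs.heckeWord_append]
  have hY : cs.heckeMul (cs.heckeMul u v') w = cs.heckeWord u (Lv' ++ Lw) := by
    rw [CoxeterSystem.heckeMul, CoxeterSystem.heckeMul, ← hLwdef, ← hLvdef', cs.heckeWord_append]
  rw [hX, hY]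
  exact cs.bruhatLE_of_cle
    (cs.cle_heckeWord_sublist (hsub.append (List.Sublist.refl Lw)) u)
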